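/- Let (c^C_{DE})_{C,D,E ∈ {1,…,n}} be scalars antisymmetric in the lower indices (c^C_{DE} = −c^C_{ED}) which are moreover unimodular, i.e. Σ_C c^C_{DC} = 0 for every D. Then for all indices A, B ∈ {1,…,n}: (1/2) Σ_{C,D,E} c^C_{DE} e^D ∧ e^E ∧ e^{(n-3)}_{ABC} = Σ_C c^C_{AB} e^{(n-1)}_C. (This is the algebraic content of the identity d(vol^{(n-2)}_{AB}) = Ω^C ∧ vol^{(n-3)}_{ABC} − c^C_{AB} vol^{(n-1)}_C used for the structure constants of the Poincaré algebra, which is unimodular.) -/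

import Mathlib

noncomputable section

variable (𝕂 : Type*) [Field 𝕂] [CharZero 𝕂] (E : Type*) [AddCommGroup E] [Module 𝕂 E]

/-- Iterated interior product: `icontr [X₁, …, X_p] α = i_{X_p}(⋯(i_{X₁} α))`; this realises
the interior product `(X₁ ∧ ⋯ ∧ X_p) ⌟ α` of a decomposable `p`-vector of the dual space
against `α`, where `i_X` contracts the first argument of `α` with `X`. -/
def icontr (L : List (Module.Dual 𝕂 E)) (α : ExteriorAlgebra 𝕂 E) : ExteriorAlgebra 𝕂 E :=
  L.foldl (fun a d => CliffordAlgebra.contractLeft d a) α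

/-- The wedge product of a list of vectors, as an element of the exterior algebra. -/
def wedgeList (v : List E) : ExteriorAlgebra 𝕂 E := (v.map (ExteriorAlgebra.ι 𝕂)).prod

variable {n : ℕ}

/-- `vol := e^1 ∧ ⋯ ∧ e^n`. -/
def volB (e : Module.Basis (Fin n) 𝕂 E) : ExteriorAlgebra 𝕂 E :=
  wedgeList 𝕂 E ((List.finRange n).map e)

/-- The dual form `e^{(n-p)}_{A₁…A_p} := (u_{A₁} ∧ ⋯ ∧ u_{A_p}) ⌟ vol`, for an arbitrary
list of indices `A₁, …, A_p`. -/
def dualFormL (e : Module.Basis (Fin n) 𝕂 E) (L : List (Fin n)) : ExteriorAlgebra 𝕂 E :=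
  icontr 𝕂 E (L.map e.dualBasis) (volB 𝕂 E e)

set_option linter.unusedSectionVars false

lemma wedge_mem_zero (L : List E) (x : E) (hx : x ∈ L) :
    ExteriorAlgebra.ι 𝕂 x * wedgeList 𝕂 E L = 0 := by
  induction L with
  | nil => simp at hx
  | cons y L ih =>
    simp only [wedgeList, List.map_cons, List.prod_cons] at *
    rcases List.mem_cons.mp hx with h | h
    · subst h
      rw [← mul_assoc, ExteriorAlgebra.ι_sq_zero, zero_mul]
    · have hcomm : ExteriorAlgebra.ι 𝕂 x * ExteriorAlgebra.ι 𝕂 y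
          = - (ExteriorAlgebra.ι 𝕂 y * ExteriorAlgebra.ι 𝕂 x) := by
        have := ExteriorAlgebra.ι_sq_zero (R := 𝕂) (x + y)
        rw [map_add] at this
        linear_combination (norm := noncomm_ring) this
          - ExteriorAlgebra.ι_sq_zero (R := 𝕂) x - ExteriorAlgebra.ι_sq_zero (R := 𝕂) y
      rw [← mul_assoc, hcomm, neg_mul, mul_assoc, ih h, mul_zero, neg_zero]

lemma ι_mul_volB (e : Module.Basis (Fin n) 𝕂 E) (x : E) :
    ExteriorAlgebra.ι 𝕂 x * volB 𝕂 E e = 0 := by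
  have hx := Module.Basis.sum_repr e x
  rw [← hx, map_sum, Finset.sum_mul]
  refine Finset.sum_eq_zero fun i _ => ?_
  rw [map_smul, smul_mul_assoc, volB, wedge_mem_zero, smul_zero]
  exact List.mem_map_of_mem (f := e) (List.mem_finRange i)

lemma ι_mul_contract (d : Module.Dual 𝕂 E) (x : E) (α : ExteriorAlgebra 𝕂 E) :
    ExteriorAlgebra.ι 𝕂 x * CliffordAlgebra.contractLeft d α
      = d x • α - CliffordAlgebra.contractLeft d (ExteriorAlgebra.ι 𝕂 x * α) := by
  rw [CliffordAlgebra.contractLeft_ι_mul, sub_sub_cancel]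

lemma triple (e : Module.Basis (Fin n) 𝕂 E) (A B C D Ep : Fin n) :
    ExteriorAlgebra.ι 𝕂 (e D) * ExteriorAlgebra.ι 𝕂 (e Ep) * dualFormL 𝕂 E e [A, B, C]
      = ((if Ep = C then (1:𝕂) else 0) * (if D = B then (1:𝕂) else 0)) • dualFormL 𝕂 E e [A]
      - ((if Ep = C then (1:𝕂) else 0) * (if D = A then (1:𝕂) else 0)) • dualFormL 𝕂 E e [B]
      - ((if Ep = B then (1:𝕂) else 0) * (if D = C then (1:𝕂) else 0)) • dualFormL 𝕂 E e [A]
      + ((if Ep = B then (1:𝕂) else 0) * (if D = A then (1:𝕂) else 0)) • dualFormL 𝕂 E e [C]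
      + ((if Ep = A then (1:𝕂) else 0) * (if D = C then (1:𝕂) else 0)) • dualFormL 𝕂 E e [B]
      - ((if Ep = A then (1:𝕂) else 0) * (if D = B then (1:𝕂) else 0)) • dualFormL 𝕂 E e [C] := by
  set v := volB 𝕂 E e with hv
  set u := e.dualBasis with hu
  have h1 : ∀ (x : E) (X : Fin n),
      ExteriorAlgebra.ι 𝕂 x * CliffordAlgebra.contractLeft (u X) v
        = u X x • v := by
    intro x X
    rw [ι_mul_contract, ι_mul_volB, map_zero, sub_zero]
  have h2 : ∀ (x : E) (X Y : Fin n),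
      ExteriorAlgebra.ι 𝕂 x
          * CliffordAlgebra.contractLeft (u Y) (CliffordAlgebra.contractLeft (u X) v)
        = u Y x • CliffordAlgebra.contractLeft (u X) v
          - u X x • CliffordAlgebra.contractLeft (u Y) v := by
    intro x X Y
    rw [ι_mul_contract, h1, map_smul]
  have h3 : ∀ (x : E),
      ExteriorAlgebra.ι 𝕂 x * CliffordAlgebra.contractLeft (u C)
          (CliffordAlgebra.contractLeft (u B) (CliffordAlgebra.contractLeft (u A) v))
        = u C x • CliffordAlgebra.contractLeft (u B) (CliffordAlgebra.contractLeft (u A) v)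
        - u B x • CliffordAlgebra.contractLeft (u C) (CliffordAlgebra.contractLeft (u A) v)
        + u A x • CliffordAlgebra.contractLeft (u C) (CliffordAlgebra.contractLeft (u B) v) := by
    intro x
    rw [ι_mul_contract, h2, map_sub, map_smul, map_smul]
    module
  have hd : dualFormL 𝕂 E e [A, B, C]
      = CliffordAlgebra.contractLeft (u C)
          (CliffordAlgebra.contractLeft (u B) (CliffordAlgebra.contractLeft (u A) v)) := by
    simp [dualFormL, icontr, hu, hv]
  have hd1 : ∀ X : Fin n,
      dualFormL 𝕂 E e [X] = CliffordAlgebra.contractLeft (u X) v := by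
    intro X; simp [dualFormL, icontr, hu, hv]
  have hub : ∀ X Y : Fin n, u X (e Y) = if Y = X then (1:𝕂) else 0 := fun X Y =>
    Module.Basis.dualBasis_apply_self e X Y
  rw [hd, mul_assoc, h3, mul_add, mul_sub, mul_smul_comm, mul_smul_comm, mul_smul_comm,
    h2, h2, h2, hd1, hd1, hd1]
  simp only [hub]
  module

lemma sum_if_if {ι : Type*} [Fintype ι] [DecidableEq ι] {M : Type*} [AddCommMonoid M]
    (q : Prop) [Decidable q] (f : ι → M) (x : ι) :
    ∑ y : ι, (if q then (if y = x then f y else 0) else 0) = if q then f x else 0 := by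
  split <;> simp

/-- for scalars `c^C_{DE}` antisymmetric in the lower indices and unimodular
(`Σ_C c^C_{DC} = 0` for every `D`),
`(1/2) Σ_{C,D,E} c^C_{DE} e^D ∧ e^E ∧ e^{(n-3)}_{ABC} = Σ_C c^C_{AB} e^{(n-1)}_C`. -/
theorem structure_constants_contraction_identity_unimodular
    (e : Module.Basis (Fin n) 𝕂 E) (c : Fin n → Fin n → Fin n → 𝕂)
    (hanti : ∀ C D E' : Fin n, c C D E' = - c C E' D)
    (huni : ∀ D : Fin n, ∑ C : Fin n, c C D C = 0) (A B : Fin n) :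
    ((1 : 𝕂) / 2) • ∑ C : Fin n, ∑ D : Fin n, ∑ E' : Fin n,
        c C D E' •
          (ExteriorAlgebra.ι 𝕂 (e D) * ExteriorAlgebra.ι 𝕂 (e E') * dualFormL 𝕂 E e [A, B, C])
      = ∑ C : Fin n, c C A B • dualFormL 𝕂 E e [C] := by
  simp only [triple 𝕂 E e A B]
  simp only [smul_sub, smul_add, smul_smul, mul_ite, mul_one, mul_zero, ite_smul, zero_smul,
    smul_ite, smul_zero, one_smul,
    Finset.sum_sub_distrib, Finset.sum_add_distrib, Finset.sum_ite_eq', Finset.mem_univ, if_true]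
  simp only [sum_if_if, Finset.sum_ite_eq', Finset.mem_univ, if_true]
  have e1 : ∑ x : Fin n, c x B x • dualFormL 𝕂 E e [A] = 0 := by
    rw [← Finset.sum_smul, huni, zero_smul]
  have e2 : ∑ x : Fin n, c x A x • dualFormL 𝕂 E e [B] = 0 := by
    rw [← Finset.sum_smul, huni, zero_smul]
  have e3 : ∑ x : Fin n, c x x B • dualFormL 𝕂 E e [A] = 0 := by
    simp_rw [fun x => hanti x x B, neg_smul, Finset.sum_neg_distrib, ← Finset.sum_smul, huni,
      zero_smul, neg_zero]
  have e5 : ∑ x : Fin n, c x x A • dualFormL 𝕂 E e [B] = 0 := by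
    simp_rw [fun x => hanti x x A, neg_smul, Finset.sum_neg_distrib, ← Finset.sum_smul, huni,
      zero_smul, neg_zero]
  have e6 : ∑ x : Fin n, c x B A • dualFormL 𝕂 E e [x]
      = - ∑ x : Fin n, c x A B • dualFormL 𝕂 E e [x] := by
    simp_rw [fun x => hanti x B A, neg_smul, Finset.sum_neg_distrib]
  rw [e1, e2, e3, e5, e6]
  module
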